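/- Let H be a connected finite simple graph and let G = H ∘ K₂ be the corona of H with K₂, with α = α(G). Then for every integer k with 1 ≤ k < α, we have 2(α − k)·s_k ≤ (k+1)·s_{k+1} ≤ 3(α − k)·s_k. -/

import Mathlib

open Finset
open scoped Classical

variable {V : Type*}

/-- `S` is an independent set in `G`: its vertices are pairwise non-adjacent. -/
def IsIndepSet (G : SimpleGraph V) (S : Finset V) : Prop :=
  ∀ ⦃u⦄, u ∈ S → ∀ ⦃v⦄, v ∈ S → ¬ G.Adj u v

/-- The neighborhood `N(S)`: all vertices having at least one neighbor in `S`. -/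
noncomputable def neigh [Fintype V] (G : SimpleGraph V) (S : Finset V) : Finset V :=
  Finset.univ.filter fun v => ∃ u ∈ S, G.Adj u v

/-- The independence number `α(G)`: the maximum size of an independent set. -/
noncomputable def indepNum [Fintype V] (G : SimpleGraph V) : ℕ :=
  (Finset.univ.filter fun S : Finset V => IsIndepSet G S).sup Finset.card

/-- `s_k`: the number of independent sets of size `k` in `G`. -/
noncomputable def indepCount [Fintype V] (G : SimpleGraph V) (k : ℕ) : ℕ :=
  (Finset.univ.filter fun S : Finset V => IsIndepSet G S ∧ S.card = k).card

/-- A maximal independent set (not properly contained in another independent set). -/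
def IsMaximalIndepSet (G : SimpleGraph V) (S : Finset V) : Prop :=
  IsIndepSet G S ∧ ∀ T : Finset V, IsIndepSet G T → S ⊆ T → S = T

/-- `G` is well-covered: all maximal independent sets have the same cardinality. -/
def IsWellCovered (G : SimpleGraph V) : Prop :=
  ∀ S T : Finset V, IsMaximalIndepSet G S → IsMaximalIndepSet G T → S.card = T.card

/-- `G` is 1-well-covered: it is well-covered, has at least two vertices, and
deleting any vertex leaves a well-covered graph. -/
def IsOneWellCovered [Fintype V] (G : SimpleGraph V) : Prop :=
  IsWellCovered G ∧ 2 ≤ Fintype.card V ∧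
    ∀ v : V, IsWellCovered (G.induce ({v}ᶜ : Set V))

/-- The corona `H ∘ K₂`: for each vertex `v` of `H`, two new vertices
(`(v, false)` and `(v, true)`) adjacent to each other and to `v` are added. -/
def corona2 (H : SimpleGraph V) : SimpleGraph (V ⊕ V × Bool) :=
  SimpleGraph.fromRel fun x y =>
    match x, y with
    | Sum.inl u, Sum.inl v => H.Adj u v
    | Sum.inl u, Sum.inr (v, _) => u = v
    | Sum.inr (u, _), Sum.inr (v, _) => u = v
    | _, _ => False

namespace Stmt13Aux

def tau : V ⊕ V × Bool → V
  | Sum.inl v => v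
  | Sum.inr (v, _) => v

lemma adj_of_tau_eq (H : SimpleGraph V) {x y : V ⊕ V × Bool} (hxy : x ≠ y)
    (h : tau x = tau y) : (corona2 H).Adj x y := by
  cases x with
  | inl u =>
    cases y with
    | inl v => simp [tau] at h; subst h; exact absurd rfl hxy
    | inr p =>
      obtain ⟨v, b⟩ := p
      simp [tau] at h; subst h
      simp [corona2, SimpleGraph.fromRel_adj, hxy]
  | inr p =>
    obtain ⟨u, b⟩ := p
    cases y with
    | inl v =>
      simp [tau] at h; subst h
      simp [corona2, SimpleGraph.fromRel_adj, hxy]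
    | inr q =>
      obtain ⟨v, b'⟩ := q
      simp [tau] at h; subst h
      simp [corona2, SimpleGraph.fromRel_adj, hxy]

lemma adj_cases (H : SimpleGraph V) {x y : V ⊕ V × Bool} (h : (corona2 H).Adj x y) :
    tau x = tau y ∨ ∃ u v, x = Sum.inl u ∧ y = Sum.inl v ∧ H.Adj u v := by
  cases x with
  | inl u =>
    cases y with
    | inl v =>
      right
      refine ⟨u, v, rfl, rfl, ?_⟩
      simp [corona2, SimpleGraph.fromRel_adj] at h
      rcases h.2 with h' | h'
      · exact h'
      · exact h'.symm
    | inr p =>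
      obtain ⟨v, b⟩ := p
      left
      simp [corona2, SimpleGraph.fromRel_adj] at h
      simpa [tau] using h
  | inr p =>
    obtain ⟨u, b⟩ := p
    cases y with
    | inl v =>
      left
      simp [corona2, SimpleGraph.fromRel_adj] at h
      simpa [tau] using h.symm
    | inr q =>
      obtain ⟨v, b'⟩ := q
      left
      simp [corona2, SimpleGraph.fromRel_adj] at h
      simp [tau]
      tauto

lemma tau_injOn (H : SimpleGraph V) {S : Finset (V ⊕ V × Bool)}
    (hS : IsIndepSet (corona2 H) S) : Set.InjOn tau (S : Set (V ⊕ V × Bool)) := by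
  intro x hx y hy hxy
  by_contra hne
  exact hS hx hy (adj_of_tau_eq H hne hxy)

lemma card_image_tau (H : SimpleGraph V) {S : Finset (V ⊕ V × Bool)}
    (hS : IsIndepSet (corona2 H) S) : (S.image tau).card = S.card :=
  Finset.card_image_of_injOn (tau_injOn H hS)

end Stmt13Aux

namespace Stmt13Aux

lemma card_filter_product {α β : Type*} (s : Finset α) (t : Finset β) (Q : α → β → Prop)
    [DecidablePred fun p : α × β => Q p.1 p.2] [∀ a, DecidablePred (Q a)] :
    ((s ×ˢ t).filter fun p => Q p.1 p.2).card = ∑ a ∈ s, (t.filter fun b => Q a b).card := by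
  rw [Finset.card_filter, Finset.sum_product]
  exact Finset.sum_congr rfl fun a _ => (Finset.card_filter _ _).symm

lemma indep_insert {α : Type*} [DecidableEq α] {G : SimpleGraph α} {S : Finset α} {w : α}
    (hS : IsIndepSet G S) (hw : ∀ s ∈ S, ¬ G.Adj w s) : IsIndepSet G (insert w S) := by
  intro u hu v hv hadj
  rw [Finset.mem_insert] at hu hv
  rcases hu with rfl | hu <;> rcases hv with rfl | hv
  · exact G.irrefl hadj
  · exact hw v hv hadj
  · exact hw u hu hadj.symm
  · exact hS hu hv hadj

/-- Double counting identity, for any graph. -/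
lemma count_id {α : Type*} [DecidableEq α] [Fintype α] (G : SimpleGraph α) (k : ℕ) :
    (k + 1) * indepCount G (k + 1) =
      ∑ S ∈ Finset.univ.filter (fun S : Finset α => IsIndepSet G S ∧ S.card = k),
        (Finset.univ.filter fun w => w ∉ S ∧ IsIndepSet G (insert w S)).card := by
  have h1 : (k + 1) * indepCount G (k + 1) =
      ∑ T ∈ Finset.univ.filter (fun T : Finset α => IsIndepSet G T ∧ T.card = k + 1),
        (Finset.univ.filter fun w => w ∈ T).card := by
    rw [indepCount, mul_comm, ← Finset.sum_const_nat (m := k + 1)]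
    intro T hT
    simp only [Finset.mem_filter] at hT
    simp only [Finset.filter_mem_eq_inter, Finset.univ_inter]
    exact hT.2.2
  have e1 := card_filter_product
    (Finset.univ.filter fun T : Finset α => IsIndepSet G T ∧ T.card = k + 1)
    (Finset.univ : Finset α) (fun T w => w ∈ T)
  have e2 := card_filter_product
    (Finset.univ.filter fun S : Finset α => IsIndepSet G S ∧ S.card = k)
    (Finset.univ : Finset α) (fun S w => w ∉ S ∧ IsIndepSet G (insert w S))
  rw [h1]
  refine Eq.trans e1.symm (Eq.trans ?_ e2)
  apply Finset.card_bij (fun p _ => (p.1.erase p.2, p.2))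
  · rintro ⟨T, w⟩ hp
    simp only [Finset.mem_filter, Finset.mem_product, Finset.mem_univ, true_and, and_true] at hp ⊢
    obtain ⟨⟨hTi, hTc⟩, hw⟩ := hp
    refine ⟨⟨fun u hu v hv => hTi (Finset.erase_subset _ _ hu) (Finset.erase_subset _ _ hv), ?_⟩,
      Finset.notMem_erase _ _, ?_⟩
    · rw [Finset.card_erase_of_mem hw, hTc]; rfl
    · rwa [Finset.insert_erase hw]
  · rintro ⟨T, w⟩ hp ⟨T', w'⟩ hp' heq
    simp only [Finset.mem_filter, Finset.mem_product, Finset.mem_univ, true_and, and_true] at hp hp'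
    obtain ⟨he, hw⟩ := Prod.mk.injEq _ _ _ _ ▸ heq
    have hww : w = w' := hw
    subst hww
    have : T = T' := by
      rw [← Finset.insert_erase hp.2, ← Finset.insert_erase hp'.2, he]
    simp [this]
  · rintro ⟨S, w⟩ hp
    simp only [Finset.mem_filter, Finset.mem_product, Finset.mem_univ, true_and, and_true] at hp
    obtain ⟨⟨hSi, hSc⟩, hwS, hins⟩ := hp
    refine ⟨(insert w S, w), ?_, ?_⟩
    · simp only [Finset.mem_filter, Finset.mem_product, Finset.mem_univ, true_and, and_true]
      exact ⟨⟨hins, by rw [Finset.card_insert_of_notMem hwS, hSc]⟩, Finset.mem_insert_self _ _⟩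
    · simp [Finset.erase_insert hwS]

end Stmt13Aux

namespace Stmt13Aux

variable {V : Type*}

lemma not_adj_inr (H : SimpleGraph V) {S : Finset (V ⊕ V × Bool)} {v : V} {b : Bool}
    (hv : v ∉ S.image tau) (s : V ⊕ V × Bool) (hs : s ∈ S) :
    ¬ (corona2 H).Adj (Sum.inr (v, b)) s := by
  intro hadj
  rcases adj_cases H hadj with h | ⟨u, u', hx, _, _⟩
  · exact hv (Finset.mem_image.2 ⟨s, hs, h.symm⟩)
  · cases hx

lemma ext_lower [Fintype V] (H : SimpleGraph V) {S : Finset (V ⊕ V × Bool)} {k : ℕ}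
    (hS : IsIndepSet (corona2 H) S) (hcard : S.card = k) :
    2 * (Fintype.card V - k) ≤
      (Finset.univ.filter fun w => w ∉ S ∧ IsIndepSet (corona2 H) (insert w S)).card := by
  have hA : (S.image tau).card = k := by rw [card_image_tau H hS, hcard]
  have key : ((Finset.univ \ S.image tau) ×ˢ (Finset.univ : Finset Bool)).card ≤
      (Finset.univ.filter fun w => w ∉ S ∧ IsIndepSet (corona2 H) (insert w S)).card := by
    apply Finset.card_le_card_of_injOn (fun p => Sum.inr p)
    · rintro ⟨v, b⟩ hp
      simp only [Finset.coe_product, Set.mem_prod, Finset.mem_coe, Finset.mem_product, Finset.mem_sdiff, Finset.mem_univ, true_and] at hp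
      have hv : v ∉ S.image tau := hp.1
      refine Finset.mem_filter.2 ⟨Finset.mem_univ _, ?_, ?_⟩
      · intro hmem
        exact hv (Finset.mem_image.2 ⟨_, hmem, rfl⟩)
      · exact indep_insert hS (not_adj_inr H hv)
    · intro p _ q _ h
      exact Sum.inr.inj h
  calc 2 * (Fintype.card V - k)
      = ((Finset.univ \ S.image tau) ×ˢ (Finset.univ : Finset Bool)).card := by
        rw [Finset.card_product, Finset.card_sdiff_of_subset (Finset.subset_univ _),
          Finset.card_univ, hA]
        simp [mul_comm]
    _ ≤ _ := key

lemma ext_upper [Fintype V] (H : SimpleGraph V) {S : Finset (V ⊕ V × Bool)} {k : ℕ}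
    (hS : IsIndepSet (corona2 H) S) (hcard : S.card = k) :
    (Finset.univ.filter fun w => w ∉ S ∧ IsIndepSet (corona2 H) (insert w S)).card ≤
      3 * (Fintype.card V - k) := by
  have hA : (S.image tau).card = k := by rw [card_image_tau H hS, hcard]
  have hsub : (Finset.univ.filter fun w => w ∉ S ∧ IsIndepSet (corona2 H) (insert w S)) ⊆
      ((Finset.univ \ S.image tau) ×ˢ (Finset.univ : Finset (Option Bool))).image
        (fun p => Option.elim p.2 (Sum.inl p.1) (fun b => Sum.inr (p.1, b))) := by
    intro w hw
    simp only [Finset.mem_filter, Finset.mem_univ, true_and] at hw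
    obtain ⟨hwS, hins⟩ := hw
    have htau : tau w ∉ S.image tau := by
      intro hmem
      obtain ⟨s, hs, hts⟩ := Finset.mem_image.1 hmem
      have hne : w ≠ s := fun h => hwS (h ▸ hs)
      exact hins (Finset.mem_insert_self w S)
        (Finset.mem_insert_of_mem hs) (adj_of_tau_eq H hne hts.symm)
    apply Finset.mem_image.2
    cases w with
    | inl u =>
      exact ⟨(u, none), by
        simp only [Finset.mem_product, Finset.mem_sdiff, Finset.mem_univ, true_and, and_true]
        exact htau, rfl⟩
    | inr p =>
      obtain ⟨u, b⟩ := p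
      exact ⟨(u, some b), by
        simp only [Finset.mem_product, Finset.mem_sdiff, Finset.mem_univ, true_and, and_true]
        exact htau, rfl⟩
  calc (Finset.univ.filter fun w => w ∉ S ∧ IsIndepSet (corona2 H) (insert w S)).card
      ≤ _ := Finset.card_le_card hsub
    _ ≤ ((Finset.univ \ S.image tau) ×ˢ (Finset.univ : Finset (Option Bool))).card :=
        Finset.card_image_le
    _ = 3 * (Fintype.card V - k) := by
        rw [Finset.card_product, Finset.card_sdiff_of_subset (Finset.subset_univ _),
          Finset.card_univ, hA]
        simp [mul_comm, Fintype.card_option]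

lemma indepNum_corona2 [Fintype V] (H : SimpleGraph V) :
    indepNum (corona2 H) = Fintype.card V := by
  apply le_antisymm
  · apply Finset.sup_le
    intro S hS
    have hSi : IsIndepSet (corona2 H) S := (Finset.mem_filter.1 hS).2
    calc S.card = (S.image tau).card := (card_image_tau H hSi).symm
      _ ≤ (Finset.univ : Finset V).card := Finset.card_le_card (Finset.subset_univ _)
      _ = Fintype.card V := Finset.card_univ
  · have hmem : (Finset.univ.image fun v : V => (Sum.inr (v, false) : V ⊕ V × Bool)) ∈
        Finset.univ.filter fun S : Finset (V ⊕ V × Bool) => IsIndepSet (corona2 H) S := by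
      refine Finset.mem_filter.2 ⟨Finset.mem_univ _, ?_⟩
      intro x hx y hy hadj
      obtain ⟨u, -, rfl⟩ := Finset.mem_image.1 hx
      obtain ⟨v, -, rfl⟩ := Finset.mem_image.1 hy
      rcases adj_cases H hadj with h | ⟨a, b, hab, -, -⟩
      · simp [tau] at h
        subst h
        exact hadj.ne rfl
      · cases hab
    have := Finset.le_sup (f := Finset.card) hmem
    calc Fintype.card V
        = (Finset.univ.image fun v : V => (Sum.inr (v, false) : V ⊕ V × Bool)).card := by
          rw [Finset.card_image_of_injective _ (fun a b h => by
            simpa using Sum.inr.inj h), Finset.card_univ]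
      _ ≤ _ := this
end Stmt13Aux


/-- If `H` is a connected graph and `G = H ∘ K₂` with `α = α(G)`,
then `2(α − k)·s_k ≤ (k+1)·s_{k+1} ≤ 3(α − k)·s_k` for all `1 ≤ k < α`. -/
theorem stmt_13 {V : Type*} [Fintype V] (H : SimpleGraph V) (hconn : H.Connected)
    (G : SimpleGraph (V ⊕ V × Bool)) (hG : G = corona2 H)
    (alpha : ℕ) (ha : alpha = indepNum G)
    (k : ℕ) (hk1 : 1 ≤ k) (hk2 : k < alpha) :
    2 * ((alpha : ℤ) - k) * indepCount G k ≤ ((k : ℤ) + 1) * indepCount G (k + 1) ∧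
    ((k : ℤ) + 1) * indepCount G (k + 1) ≤ 3 * ((alpha : ℤ) - k) * indepCount G k := by
  subst hG
  have hα : alpha = Fintype.card V := by rw [ha, Stmt13Aux.indepNum_corona2]
  have hkn : k < Fintype.card V := hα ▸ hk2
  set n := Fintype.card V with hn
  have hid := Stmt13Aux.count_id (corona2 H) k
  set A := Finset.univ.filter
    (fun S : Finset (V ⊕ V × Bool) => IsIndepSet (corona2 H) S ∧ S.card = k) with hAdef
  have hcount : indepCount (corona2 H) k = A.card := rfl
  have h1 : 2 * (n - k) * indepCount (corona2 H) k ≤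
      (k + 1) * indepCount (corona2 H) (k + 1) := by
    rw [hid, hcount]
    calc 2 * (n - k) * A.card = A.card • (2 * (n - k)) := by
          rw [smul_eq_mul]; ring
      _ ≤ _ := Finset.card_nsmul_le_sum A _ _ (fun S hS => by
          obtain ⟨-, hSi, hSc⟩ := Finset.mem_filter.1 hS
          exact Stmt13Aux.ext_lower H hSi hSc)
  have h2 : (k + 1) * indepCount (corona2 H) (k + 1) ≤
      3 * (n - k) * indepCount (corona2 H) k := by
    rw [hid, hcount]
    calc (∑ S ∈ A, (Finset.univ.filter fun w =>
            w ∉ S ∧ IsIndepSet (corona2 H) (insert w S)).card)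
        ≤ A.card • (3 * (n - k)) := Finset.sum_le_card_nsmul A _ _ (fun S hS => by
          obtain ⟨-, hSi, hSc⟩ := Finset.mem_filter.1 hS
          exact Stmt13Aux.ext_upper H hSi hSc)
      _ = 3 * (n - k) * A.card := by rw [smul_eq_mul]; ring
  have e : (alpha : ℤ) - k = ((n - k : ℕ) : ℤ) := by omega
  constructor
  · rw [e]; exact_mod_cast h1
  · rw [e]; exact_mod_cast h2
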